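/- With U the universe of oriented bipartitions of a finite nonempty set V, m ≥ 1, n ≥ 2 (possibly infinite), and F = F_m^n = {F ⊆ U : |F| < n and |⋂_{(A,B)∈F} B| < m}, the set F* of stars in F is closed under shifting in any separation system S⃗ ⊆ U: if s⃗ = (U₀,W₀) ∈ S⃗ emulates a nontrivial r⃗ in S⃗, σ ⊆ S⃗ \ {r⃗*} is a star in F*, and x⃗ ∈ σ with x⃗ ≥ r⃗, then the shift σ_{x⃗}^{s⃗} lies in F*. -/

import Mathlib

-- Oriented bipartitions `(A, B)` of `V` are represented by their first side `A`, with
-- `B = Aᶜ`; the involution is complementation, the order is inclusion, meets and joins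
-- are intersections and unions.

/-- Membership in the family `𝓕ₘⁿ`. -/
def MemF {V : Type*} (m : ℕ) (n : ℕ∞) (F : Set (Set V)) : Prop :=
  (F.ncard : ℕ∞) < n ∧ (⋂ A ∈ F, Aᶜ).ncard < m

/-- `σ` is a star of oriented bipartitions. -/
def IsStarBip {V : Type*} (σ : Set (Set V)) : Prop :=
  (∀ A ∈ σ, A ≠ Aᶜ) ∧ ∀ A ∈ σ, ∀ A' ∈ σ, A ≠ A' → A ⊆ A'ᶜ

/-- `r` is trivial in `S`. -/
def IsTrivialBip {V : Type*} (S : Set (Set V)) (r : Set V) : Prop :=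
  ∃ t ∈ S, r ⊂ t ∧ r ⊂ tᶜ

/-- `s` emulates `r` in `S`. -/
def EmulatesBip {V : Type*} (S : Set (Set V)) (s r : Set V) : Prop :=
  r ⊆ s ∧ ∀ t ∈ S, t ≠ rᶜ → r ⊆ t → s ∪ t ∈ S

/-- Lemma 4.8: the set `𝓕*` of stars in `𝓕 = 𝓕ₘⁿ` is closed under shifting: if
`s = (U₀, W₀) ∈ S` emulates a nontrivial `r` in `S`, `σ ⊆ S \ {rᶜ}` is a star in `𝓕*`
and `x ∈ σ` with `r ≤ x`, then the shift `σₓˢ` (replacing `x = (A,B)` by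
`(A ∪ U₀, B ∩ W₀)` and every other `(A',B')` by `(A' ∩ W₀, B' ∪ U₀)`) again lies in
`𝓕*`. -/
theorem F_closed_under_shifting {V : Type*} [Fintype V] (hV : Nonempty V)
    (S : Set (Set V)) (hSstar : ∀ A ∈ S, Aᶜ ∈ S)
    (m : ℕ) (hm : 1 ≤ m) (n : ℕ∞) (hn : 2 ≤ n)
    (s r : Set V) (hs : s ∈ S) (hr : r ∈ S)
    (hnt : ¬ IsTrivialBip S r)
    (hem : EmulatesBip S s r)
    (σ : Set (Set V)) (hσS : σ ⊆ S \ {rᶜ})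
    (hσstar : IsStarBip σ) (hσF : MemF m n σ)
    (x : Set V) (hx : x ∈ σ) (hrx : r ⊆ x) :
    IsStarBip (insert (x ∪ s) ((fun y => y ∩ sᶜ) '' (σ \ {x}))) ∧
    MemF m n (insert (x ∪ s) ((fun y => y ∩ sᶜ) '' (σ \ {x}))) := by
  have hne_compl : ∀ A : Set V, A ≠ Aᶜ := by
    intro A h
    obtain ⟨v⟩ := hV
    by_cases hv : v ∈ A
    · exact (h ▸ hv : v ∈ Aᶜ) hv
    · exact (show v ∈ A from h ▸ (hv : v ∈ Aᶜ)) |> hv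
  have hstar2 := hσstar.2
  constructor
  · constructor
    · exact fun A _ => hne_compl A
    · rintro A hA A' hA' hne
      rcases hA with rfl | ⟨y, ⟨hy, hyx⟩, rfl⟩
      · rcases hA' with rfl | ⟨z, ⟨hz, hzx⟩, rfl⟩
        · exact absurd rfl hne
        · -- x ∪ s ⊆ (z ∩ sᶜ)ᶜ = zᶜ ∪ s
          have hxz : x ⊆ zᶜ := hstar2 x hx z hz (fun h => hzx (h ▸ rfl))
          intro v hv
          rw [Set.compl_inter, compl_compl]
          rcases hv with hvx | hvs
          · exact Or.inl (hxz hvx)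
          · exact Or.inr hvs
      · rcases hA' with rfl | ⟨z, ⟨hz, hzx⟩, rfl⟩
        · -- y ∩ sᶜ ⊆ (x ∪ s)ᶜ = xᶜ ∩ sᶜ
          have hyx' : y ⊆ xᶜ := hstar2 y hy x hx (fun h => hyx (Set.mem_singleton_iff.mpr h))
          intro v hv
          rw [Set.compl_union]
          exact ⟨hyx' hv.1, hv.2⟩
        · -- y ∩ sᶜ ⊆ (z ∩ sᶜ)ᶜ = zᶜ ∪ s
          have hyz : y ≠ z := fun h => hne (by rw [h])
          have hyz' : y ⊆ zᶜ := hstar2 y hy z hz hyz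
          intro v hv
          rw [Set.compl_inter, compl_compl]
          exact Or.inl (hyz' hv.1)
  · constructor
    · -- cardinality bound
      have h1 : (insert (x ∪ s) ((fun y => y ∩ sᶜ) '' (σ \ {x}))).ncard ≤ σ.ncard := by
        calc (insert (x ∪ s) ((fun y => y ∩ sᶜ) '' (σ \ {x}))).ncard
            ≤ ((fun y => y ∩ sᶜ) '' (σ \ {x})).ncard + 1 := Set.ncard_insert_le _ _
          _ ≤ (σ \ {x}).ncard + 1 := by
              exact Nat.add_le_add_right (Set.ncard_image_le (Set.toFinite _)) 1
          _ = (σ.ncard - 1) + 1 := by rw [Set.ncard_diff_singleton_of_mem hx]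
          _ ≤ σ.ncard := by
              have : 1 ≤ σ.ncard := (Set.ncard_pos (Set.toFinite _)).mpr ⟨x, hx⟩
              omega
      calc ((insert (x ∪ s) ((fun y => y ∩ sᶜ) '' (σ \ {x}))).ncard : ℕ∞)
          ≤ (σ.ncard : ℕ∞) := by exact_mod_cast h1
        _ < n := hσF.1
    · -- intersection bound
      have hsub : (⋂ A ∈ insert (x ∪ s) ((fun y => y ∩ sᶜ) '' (σ \ {x})), Aᶜ) ⊆
          ⋂ A ∈ σ, Aᶜ := by
        intro v hv
        simp only [Set.mem_iInter, Set.mem_compl_iff] at hv ⊢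
        have hvxs := hv (x ∪ s) (Set.mem_insert _ _)
        have hvx : v ∉ x := fun h => hvxs (Or.inl h)
        have hvs : v ∉ s := fun h => hvxs (Or.inr h)
        intro A hA
        by_cases hAx : A = x
        · exact hAx ▸ hvx
        · have := hv (A ∩ sᶜ) (Set.mem_insert_iff.mpr (Or.inr ⟨A, ⟨hA, hAx⟩, rfl⟩))
          exact fun h => this ⟨h, hvs⟩
      exact lt_of_le_of_lt (Set.ncard_le_ncard hsub (Set.toFinite _)) hσF.2
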